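/- Detection of a balanced subfan inside a gallery class (key step in the proof of Proposition 3.17): Let F be a one-dimensional tropical fan in ℝ^n with primitive generators v_1, …, v_q and weights ω_1, …, ω_q. Fix an index m and distinct indices i_1, …, i_k ∈ {1,…,q} \ {m} (k ≥ 1), and for each t let l_t ∈ (ℤ^n)^∨ be a gallery of F on (i_t, m), i.e. l_t(v_{i_t}) = 1, l_t(v_m) = −1, l_t(v_j) = 0 for j ∉ {i_t, m}. Then: (i) the vectors v_{i_1}, …, v_{i_k} are linearly independent over ℝ; and (ii) if the family {v_m, v_{i_1}, …, v_{i_k}} is linearly dependent over ℝ, then v_m + v_{i_1} + ⋯ + v_{i_k} = 0. -/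
import Mathlib


/-- Integer pairing of a functional `l ∈ (ℤⁿ)^∨` with a vector `x ∈ ℤⁿ`. -/
def dotZ {n : ℕ} (l x : Fin n → ℤ) : ℤ := ∑ j, l j * x j

/-- Value of the nonnegative tropical regular function `max(0, l₁, …, l_k)` at `x ∈ ℤⁿ`. -/
def tropEvalZ {n k : ℕ} (l : Fin k → Fin n → ℤ) (x : Fin n → ℤ) : ℤ :=
  Finset.univ.fold max 0 (fun s => dotZ (l s) x)

/-- A one-dimensional tropical fan in ℝⁿ: pairwise distinct primitive integer vectors
`v i` (the primitive generators of the rays) spanning ℝⁿ, with positive integer weights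
`w i`, subject to the balancing condition `∑ i, w i • v i = 0`. -/
structure TropFan1 (n q : ℕ) where
  v : Fin q → Fin n → ℤ
  w : Fin q → ℤ
  v_inj : Function.Injective v
  v_prim : ∀ i, Finset.univ.gcd (v i) = 1
  w_pos : ∀ i, 0 < w i
  balanced : ∑ i, w i • v i = 0
  spans : Submodule.span ℝ (Set.range fun i => fun j => ((v i j : ℝ))) = ⊤

/-- A gallery of `F` on the pair of distinct indices `(a, b)`. -/
def IsGallery {n q : ℕ} (F : TropFan1 n q) (a b : Fin q) (l : Fin n → ℤ) : Prop :=
  a ≠ b ∧ F.w a = 1 ∧ F.w b = 1 ∧ dotZ l (F.v a) = 1 ∧ dotZ l (F.v b) = -1 ∧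
    ∀ j, j ≠ a → j ≠ b → dotZ l (F.v j) = 0


/-- Detection of a balanced subfan inside a gallery class (key step in the proof of
Proposition 3.17): (i) the vectors `v_{i_1}, …, v_{i_k}` are linearly independent over
ℝ; (ii) if the family `{v_m, v_{i_1}, …, v_{i_k}}` is linearly dependent over ℝ, then
`v_m + v_{i_1} + ⋯ + v_{i_k} = 0`. -/
theorem gallery_class_balanced_subfan {n q k : ℕ} (hk : 1 ≤ k) (F : TropFan1 n q)
    (m : Fin q) (i : Fin k → Fin q) (hi : Function.Injective i) (him : ∀ t, i t ≠ m)
    (l : Fin k → Fin n → ℤ) (hgal : ∀ t, IsGallery F (i t) m (l t)) :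
    LinearIndependent ℝ (fun t : Fin k => fun j => ((F.v (i t) j : ℝ))) ∧
    (¬ LinearIndependent ℝ
        (Fin.cons (fun j => ((F.v m j : ℝ)))
          (fun s => fun j => ((F.v (i s) j : ℝ))) : Fin (k + 1) → Fin n → ℝ) →
      F.v m + ∑ t, F.v (i t) = 0) := by
  classical
  set V : Fin k → Fin n → ℝ := fun t j => ((F.v (i t) j : ℝ)) with hV
  have hcast : ∀ (t : Fin k) (a : Fin q),
      ∑ j, (l t j : ℝ) * (F.v a j : ℝ) = (dotZ (l t) (F.v a) : ℝ) := by
    intro t a; simp [dotZ]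
  have hpair : ∀ t s : Fin k, ∑ j, (l t j : ℝ) * V s j = if s = t then 1 else 0 := by
    intro t s
    by_cases h : s = t
    · subst h
      have := (hgal s).2.2.2.1
      simp [hV, hcast, this]
    · have h0 : dotZ (l t) (F.v (i s)) = 0 :=
        (hgal t).2.2.2.2.2 (i s) (fun he => h (hi he)) (him s)
      simp [hV, hcast, h0, h]
  have hpairm : ∀ t : Fin k, ∑ j, (l t j : ℝ) * (F.v m j : ℝ) = -1 := by
    intro t
    have := (hgal t).2.2.2.2.1
    simp [hcast, this]
  have key : ∀ (c : Fin k → ℝ) (t : Fin k),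
      ∑ j, (l t j : ℝ) * (∑ s, c s • V s) j = c t := by
    intro c t
    simp only [Finset.sum_apply, Pi.smul_apply, smul_eq_mul, Finset.mul_sum]
    rw [Finset.sum_comm]
    have : ∀ s : Fin k, ∑ j, (l t j : ℝ) * (c s * V s j) = c s * (if s = t then 1 else 0) := by
      intro s
      rw [← hpair t s, Finset.mul_sum]
      apply Finset.sum_congr rfl
      intro j _; ring
    simp only [this]
    simp
  have hli : LinearIndependent ℝ V := by
    rw [Fintype.linearIndependent_iff]
    intro g hg t
    have h1 : ∑ j, (l t j : ℝ) * (∑ s, g s • V s) j = 0 := by rw [hg]; simp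
    rw [key g t] at h1
    exact h1
  refine ⟨hli, ?_⟩
  intro hdep
  have hvm : (fun j => ((F.v m j : ℝ))) ∈ Submodule.span ℝ (Set.range V) := by
    by_contra hmem
    exact hdep ((linearIndependent_fin_cons).mpr ⟨hli, hmem⟩)
  rw [Submodule.mem_span_range_iff_exists_fun ℝ] at hvm
  obtain ⟨c, hc⟩ := hvm
  have hct : ∀ t, c t = -1 := by
    intro t
    have h1 : ∑ j, (l t j : ℝ) * (∑ s, c s • V s) j = -1 := by
      rw [hc]; exact hpairm t
    rw [key c t] at h1
    exact h1
  have hreal : ∀ j, (F.v m j : ℝ) + ∑ t, (F.v (i t) j : ℝ) = 0 := by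
    intro j
    have := congrFun hc j
    simp only [Finset.sum_apply, Pi.smul_apply, smul_eq_mul, hct] at this
    have h2 : ∑ t, (-1 : ℝ) * V t j = -∑ t, V t j := by
      rw [← Finset.sum_neg_distrib]; simp
    rw [h2] at this
    simp only [hV] at this ⊢
    linarith [this]
  funext j
  have := hreal j
  have h3 : (F.v m + ∑ t, F.v (i t)) j = F.v m j + ∑ t, F.v (i t) j := by
    simp [Finset.sum_apply]
  rw [h3]
  exact_mod_cast this
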